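/- Let Γ be a graph of order n with maximum degree Δ. Every dominating set S in the complement graph Γ̄ with |S| ≥ ⌈(n+k+Δ-1)/2⌉ is a global offensive k-alliance in Γ̄. -/

import Mathlib

open Finset

variable {V V₁ V₂ : Type*}

/-- Number of neighbors of `v` lying in `S`. -/
def degOn [Fintype V] [DecidableEq V] (G : SimpleGraph V) [DecidableRel G.Adj]
    (S : Finset V) (v : V) : ℕ :=
  (G.neighborFinset v ∩ S).card

/-- `S` is a dominating set of `G`. -/
def IsDominating [Fintype V] (G : SimpleGraph V) (S : Finset V) : Prop :=
  ∀ v ∉ S, ∃ u ∈ S, G.Adj u v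

/-- `S` is a global offensive `k`-alliance in `G`. -/
def IsGOA [Fintype V] [DecidableEq V] (G : SimpleGraph V) [DecidableRel G.Adj]
    (k : ℤ) (S : Finset V) : Prop :=
  IsDominating G S ∧ ∀ v ∉ S, (degOn G Sᶜ v : ℤ) + k ≤ (degOn G S v : ℤ)

/-- `S` is an offensive `k`-alliance in `G`: it is nonempty and every boundary
vertex has at least `k` more neighbors inside `S` than outside. -/
def IsOA [Fintype V] [DecidableEq V] (G : SimpleGraph V) [DecidableRel G.Adj]
    (k : ℤ) (S : Finset V) : Prop :=
  S.Nonempty ∧ ∀ v ∉ S, (∃ u ∈ S, G.Adj u v) →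
    (degOn G Sᶜ v : ℤ) + k ≤ (degOn G S v : ℤ)

/-- `S` is an `r`-dependent set in `G`. -/
def IsDependent [Fintype V] [DecidableEq V] (G : SimpleGraph V) [DecidableRel G.Adj]
    (r : ℕ) (S : Finset V) : Prop :=
  ∀ v ∈ S, degOn G S v ≤ r

/-- `S` is a `τ`-dominating set in `G`. -/
def IsTauDominating [Fintype V] [DecidableEq V] (G : SimpleGraph V) [DecidableRel G.Adj]
    (τ : ℝ) (S : Finset V) : Prop :=
  ∀ v ∉ S, τ * (G.degree v : ℝ) ≤ (degOn G S v : ℝ)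

/-- The global offensive `k`-alliance number of `G`. -/
noncomputable def goaNum [Fintype V] [DecidableEq V] (G : SimpleGraph V)
    [DecidableRel G.Adj] (k : ℤ) : ℕ :=
  sInf {t | ∃ S : Finset V, IsGOA G k S ∧ S.card = t}

/-- The maximum cardinality of an `r`-dependent set in `G`. -/
noncomputable def depNum [Fintype V] [DecidableEq V] (G : SimpleGraph V)
    [DecidableRel G.Adj] (r : ℕ) : ℕ :=
  sSup {t | ∃ S : Finset V, IsDependent G r S ∧ S.card = t}

theorem stmt_12 [Fintype V] [DecidableEq V] (G : SimpleGraph V) [DecidableRel G.Adj]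
    [DecidableRel Gᶜ.Adj] (k : ℤ) (S : Finset V) (hdom : IsDominating Gᶜ S)
    (hcard : (⌈(((Fintype.card V : ℤ) + k + (G.maxDegree : ℤ) - 1 : ℤ) : ℚ) / 2⌉ : ℤ)
      ≤ (S.card : ℤ)) :
    IsGOA Gᶜ k S := by
  refine ⟨hdom, fun v hv => ?_⟩
  have hsn : S.card < Fintype.card V := by
    have : v ∈ Sᶜ := by simpa using hv
    have h1 : (1:ℕ) ≤ Sᶜ.card := card_pos.mpr ⟨v, this⟩
    have h2 := card_le_univ S
    rw [card_compl] at h1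
    omega
  have hub : degOn Gᶜ Sᶜ v ≤ Fintype.card V - S.card - 1 := by
    have h1 : Gᶜ.neighborFinset v ∩ Sᶜ ⊆ Sᶜ \ {v} := by
      intro u hu
      simp only [mem_inter, SimpleGraph.mem_neighborFinset] at hu
      simp only [mem_sdiff, mem_singleton]
      exact ⟨hu.2, fun h => Gᶜ.loopless.irrefl v (h ▸ hu.1)⟩
    have h2 : (Sᶜ \ {v}).card = Fintype.card V - S.card - 1 := by
      rw [card_sdiff_of_subset (by simp [hv]), card_singleton, card_compl]
    exact h2 ▸ card_le_card h1
  have hlb : S.card - G.maxDegree ≤ degOn Gᶜ S v := by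
    have h1 : S \ G.neighborFinset v ⊆ Gᶜ.neighborFinset v ∩ S := by
      intro u hu
      simp only [mem_sdiff, SimpleGraph.mem_neighborFinset] at hu
      simp only [mem_inter, SimpleGraph.mem_neighborFinset, SimpleGraph.compl_adj]
      exact ⟨⟨fun h => hv (h ▸ hu.1), fun h => hu.2 h⟩, hu.1⟩
    have hd : (G.neighborFinset v ∩ S).card ≤ G.maxDegree := by
      calc (G.neighborFinset v ∩ S).card ≤ (G.neighborFinset v).card :=
            card_le_card inter_subset_left
        _ = G.degree v := G.card_neighborFinset_eq_degree v
        _ ≤ G.maxDegree := G.degree_le_maxDegree v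
    have h3 : S.card - (G.neighborFinset v ∩ S).card ≤ (S \ G.neighborFinset v).card := by
      rw [← card_sdiff_add_card_inter S (G.neighborFinset v), inter_comm]
      omega
    have h4 := card_le_card h1
    unfold degOn
    omega
  have hkey : ((Fintype.card V : ℤ) + k + (G.maxDegree : ℤ) - 1) ≤ 2 * S.card := by
    have h3 := Int.le_ceil ((((Fintype.card V : ℤ) + k + (G.maxDegree : ℤ) - 1 : ℤ) : ℚ) / 2)
    have h4 : ((((Fintype.card V : ℤ) + k + (G.maxDegree : ℤ) - 1 : ℤ) : ℚ)) ≤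
        2 * ((S.card : ℤ) : ℚ) := by
      have h5 : ((⌈(((Fintype.card V : ℤ) + k + (G.maxDegree : ℤ) - 1 : ℤ) : ℚ) / 2⌉ : ℤ) : ℚ)
          ≤ ((S.card : ℤ) : ℚ) := by exact_mod_cast hcard
      linarith
    exact_mod_cast h4
  omega
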